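/- Let W ≥ 0, λ > 0, δ > 0 be reals and let f : ℕ → ℝ be strictly increasing and positive, α > 0. For each t, let m(t) be the least minimizer over {0,…,H} of Δ_t(x) = W·exp(−x·λ·δ) + α·f(t)·x. Then m is monotone non-increasing: t ≤ t' implies m(t') ≤ m(t). -/
import Mathlib


/-- The least minimizer `m t` of the per-slot cost
`Δ t x = W·exp(−xλδ) + α·f(t)·x` over `{0,…,H}` is non-increasing in `t`. -/
theorem stmt_2 (W lam δ α : ℝ) (hW : 0 ≤ W) (hlam : 0 < lam) (hδ : 0 < δ)
    (hα : 0 < α) (f : ℕ → ℝ) (hf : StrictMono f) (hfpos : ∀ t, 0 < f t)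
    (Δ : ℕ → ℕ → ℝ)
    (hΔ : ∀ t x, Δ t x = W * Real.exp (-(x : ℝ) * lam * δ) + α * f t * x)
    (H : ℕ) (m : ℕ → ℕ)
    (hmH : ∀ t, m t ≤ H)
    (hmin : ∀ t, ∀ x ≤ H, Δ t (m t) ≤ Δ t x)
    (hleast : ∀ t, ∀ x ≤ H, Δ t x ≤ Δ t (m t) → m t ≤ x) :
    ∀ t t', t ≤ t' → m t' ≤ m t := by
  intro t t' htt'
  rcases eq_or_lt_of_le htt' with rfl | hlt
  · exact le_rfl
  by_contra hba
  push_neg at hba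
  -- a := m t < b := m t'
  set a := m t with ha
  set b := m t' with hb
  have h1 : Δ t a ≤ Δ t b := hmin t b (hmH t')
  have h2 : Δ t' b < Δ t' a := by
    rcases lt_or_ge (Δ t' b) (Δ t' a) with h | h
    · exact h
    · exact absurd (hleast t' a (hmH t) h) (not_le.mpr hba)
  have hfab : f t < f t' := hf hlt
  have hcast : (a : ℝ) < (b : ℝ) := by exact_mod_cast hba
  have key : Δ t' b - Δ t' a = (Δ t b - Δ t a) + α * (f t' - f t) * ((b : ℝ) - a) := by
    simp only [hΔ]; ring
  have hpos : 0 < α * (f t' - f t) * ((b : ℝ) - a) :=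
    mul_pos (mul_pos hα (sub_pos.mpr hfab)) (sub_pos.mpr hcast)
  nlinarith
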